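/- Let b ∈ (0,1), a ∈ (0,1), and t > 0. The Stein derivative of order b of the function x ↦ e^{−it|x|^{1+a}x} satisfies the pointwise bound 𝒟^b(e^{−it|x|^{1+a}x})(x) ≤ c (t^{b/(2+a)} + t^b |x|^{(1+a)b}) for all x ∈ ℝ, with a constant c depending only on a and b. -/

import Mathlib

open MeasureTheory
open scoped NNReal ENNReal

/-- The Stein fractional derivative of order `b` on `ℝ`. -/
noncomputable def steinD (b : ℝ) (f : ℝ → ℂ) (x : ℝ) : ℝ :=
  (∫ y : ℝ, ‖f x - f y‖ ^ 2 / |x - y| ^ (1 + 2 * b)) ^ (1 / 2 : ℝ)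

set_option maxHeartbeats 1000000

open Real Set

lemma norm_expI_sub_one (θ : ℝ) : ‖Complex.exp (θ * Complex.I) - 1‖ ≤ |θ| := by
  have h : Complex.exp (θ * Complex.I) - 1 = Complex.mk (Real.cos θ - 1) (Real.sin θ) := by
    rw [Complex.exp_mul_I]
    apply Complex.ext <;> simp [Complex.cos_ofReal_re, Complex.sin_ofReal_re]
  rw [h]
  have habs : ‖Complex.mk (Real.cos θ - 1) (Real.sin θ)‖
      = Real.sqrt ((Real.cos θ - 1)^2 + (Real.sin θ)^2) := by
    rw [Complex.norm_def, Complex.normSq_mk]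
    ring_nf
  rw [habs]
  have h1 : (Real.cos θ - 1)^2 + (Real.sin θ)^2 ≤ θ^2 := by
    have h2 := Real.sin_sq_add_cos_sq θ
    have h3 := Real.one_sub_sq_div_two_le_cos (x := θ)
    nlinarith
  calc Real.sqrt ((Real.cos θ - 1)^2 + (Real.sin θ)^2) ≤ Real.sqrt (θ^2) :=
        Real.sqrt_le_sqrt h1
    _ = |θ| := Real.sqrt_sq_eq_abs θ

lemma norm_expI_sub (r s : ℝ) : ‖Complex.exp (r * Complex.I) - Complex.exp (s * Complex.I)‖ ≤ |r - s| := by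
  have h : Complex.exp (r * Complex.I) - Complex.exp (s * Complex.I)
      = Complex.exp (s * Complex.I) * (Complex.exp ((r - s) * Complex.I) - 1) := by
    rw [mul_sub, ← Complex.exp_add]; ring_nf
  rw [h, norm_mul]
  have h1 : ‖Complex.exp ((s:ℂ) * Complex.I)‖ = 1 := by
    simp [Complex.norm_exp_ofReal_mul_I]
  rw [h1, one_mul]
  have := norm_expI_sub_one (r - s)
  rwa [Complex.ofReal_sub] at this

lemma hasDerivAt_phi (a : ℝ) (ha : 0 < a) (u : ℝ) :
    HasDerivAt (fun v : ℝ => |v| ^ (1+a) * v) ((2+a) * |u| ^ (1+a)) u := by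
  rcases lt_trichotomy u 0 with hu | hu | hu
  · -- u < 0 : near u, |v| = -v
    have hev : (fun v : ℝ => (-v) ^ (1+a) * v) =ᶠ[nhds u] (fun v : ℝ => |v| ^ (1+a) * v) := by
      filter_upwards [eventually_lt_nhds hu] with v hv
      rw [abs_of_neg hv]
    have h1 : HasDerivAt (fun v : ℝ => (-v) ^ (1+a)) (-((1+a) * (-u) ^ a)) u := by
      have h2 : HasDerivAt (fun w : ℝ => w ^ (1+a)) ((1+a) * (-u) ^ (1+a-1)) (-u) :=
        Real.hasDerivAt_rpow_const (Or.inl (by linarith))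
      have h3 := h2.comp u (hasDerivAt_neg u)
      simp only [Function.comp_def, mul_neg_one, show (1:ℝ)+a-1 = a by ring] at h3
      convert h3 using 1 <;> ring
    have h4 := h1.mul (hasDerivAt_id u)
    refine HasDerivAt.congr_of_eventuallyEq ?_ hev.symm
    convert h4 using 1 <;> try rfl
    rw [abs_of_neg hu]
    have h5 : (-u) ^ a * u = -(-u) ^ (a+1) := by
      rw [Real.rpow_add_one (by linarith : (-u) ≠ 0)]; ring
    rw [id_eq]
    calc (2+a) * (-u)^(1+a) = -((1+a) * ((-u)^a * u)) + (-u)^(1+a) * 1 := by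
          rw [h5, show a+1 = 1+a by ring]; ring
      _ = -((1+a) * (-u)^a) * u + (-u)^(1+a) * 1 := by ring
  · -- u = 0
    subst hu
    rw [hasDerivAt_iff_tendsto_slope]
    have hev : (fun v : ℝ => |v| ^ (1+a)) =ᶠ[nhdsWithin 0 {(0:ℝ)}ᶜ] slope (fun v : ℝ => |v| ^ (1+a) * v) 0 := by
      filter_upwards [self_mem_nhdsWithin] with v hv
      have hv' : v ≠ 0 := hv
      simp [slope_def_field, div_eq_iff hv']
      field_simp
    refine Filter.Tendsto.congr' hev ?_
    have hc : Filter.Tendsto (fun v : ℝ => |v| ^ (1+a)) (nhds 0) (nhds (|(0:ℝ)| ^ (1+a))) := by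
      exact ((continuous_abs.rpow_const (fun _ => Or.inr (by linarith))).tendsto 0)
    have : |(0:ℝ)| ^ (1+a) = 0 := by
      rw [abs_zero, Real.zero_rpow (by linarith)]
    rw [this] at hc
    have h0 : (2+a) * |(0:ℝ)| ^ (1+a) = 0 := by
      rw [abs_zero, Real.zero_rpow (by linarith)]; ring
    rw [h0]
    exact hc.mono_left nhdsWithin_le_nhds
  · -- u > 0
    have hev : (fun v : ℝ => v ^ (1+a) * v) =ᶠ[nhds u] (fun v : ℝ => |v| ^ (1+a) * v) := by
      filter_upwards [eventually_gt_nhds hu] with v hv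
      rw [abs_of_pos hv]
    have h2 : HasDerivAt (fun w : ℝ => w ^ (1+a)) ((1+a) * u ^ (1+a-1)) u :=
      Real.hasDerivAt_rpow_const (Or.inl (by linarith))
    have h4 := h2.mul (hasDerivAt_id u)
    refine HasDerivAt.congr_of_eventuallyEq ?_ hev.symm
    convert h4 using 1 <;> try rfl
    rw [abs_of_pos hu, id_eq]
    have h5 : u ^ (1+a-1) * u = u ^ (1+a) := by
      rw [show (1:ℝ)+a-1 = a by ring, ← Real.rpow_add_one (by linarith : u ≠ 0) a,
        show a+1 = 1+a by ring]
    calc (2+a) * u^(1+a) = (1+a) * (u^(1+a-1) * u) + u^(1+a) * 1 := by rw [h5]; ring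
      _ = (1+a) * u^(1+a-1) * u + u^(1+a) * 1 := by ring

lemma phi_lip (a : ℝ) (ha : 0 < a) {M x y : ℝ} (hx : |x| ≤ M) (hy : |y| ≤ M) :
    abs (|x| ^ (1+a) * x - |y| ^ (1+a) * y) ≤ (2+a) * M ^ (1+a) * |x - y| := by
  have hM : (0:ℝ) ≤ M := le_trans (abs_nonneg x) hx
  have key := Convex.norm_image_sub_le_of_norm_hasDerivWithin_le
    (f := fun v : ℝ => |v| ^ (1+a) * v) (f' := fun u => (2+a) * |u| ^ (1+a))
    (C := (2+a) * M ^ (1+a)) (s := Icc (-M) M)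
    (fun u _ => (hasDerivAt_phi a ha u).hasDerivWithinAt)
    (fun u hu => by
      rw [Real.norm_eq_abs, abs_of_nonneg (by positivity)]
      have h1 : |u| ≤ M := abs_le.mpr hu
      exact mul_le_mul_of_nonneg_left
        (Real.rpow_le_rpow (abs_nonneg u) h1 (by linarith)) (by linarith))
    (convex_Icc _ _) (abs_le.mp hy) (abs_le.mp hx)
  simpa [Real.norm_eq_abs] using key

lemma integrable_comp_abs' {f : ℝ → ℝ} (hf : IntegrableOn f (Ioi 0)) :
    Integrable fun x : ℝ => f |x| := by
  have hIoi : IntegrableOn (fun x => f |x|) (Ioi 0) :=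
    hf.congr_fun (fun x hx => by rw [abs_of_pos hx]) measurableSet_Ioi
  have hIic : IntegrableOn (fun x ↦ f |x|) (Iic 0) := by
    rw [← Measure.map_neg_eq_self (volume : Measure ℝ)]
    have m : MeasurableEmbedding fun x : ℝ => -x := (Homeomorph.neg ℝ).measurableEmbedding
    rw [m.integrableOn_map_iff]
    simp_rw [Function.comp_def, abs_neg, neg_preimage, neg_Iic, neg_zero]
    exact Iff.mpr integrableOn_Ici_iff_integrableOn_Ioi hIoi
  have h := hIic.union hIoi
  rwa [Iic_union_Ioi, integrableOn_univ] at h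

variable {b L δ : ℝ}

lemma G_pieces (hb : b ∈ Set.Ioo (0:ℝ) 1) (hδ : 0 < δ) (hL : 0 ≤ L) :
    IntegrableOn (fun r : ℝ => if r ≤ δ then L^2 * r^(1-2*b) else 4 * r^(-(1+2*b))) (Ioi 0)
    ∧ ∫ r in Ioi (0:ℝ), (if r ≤ δ then L^2 * r^(1-2*b) else 4 * r^(-(1+2*b)))
      = L^2 * δ^(2-2*b)/(2-2*b) + 4 * δ^(-(2*b))/(2*b) := by
  obtain ⟨hb0, hb1⟩ := hb
  set G : ℝ → ℝ := fun r => if r ≤ δ then L^2 * r^(1-2*b) else 4 * r^(-(1+2*b)) with hG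
  have h1 : IntegrableOn (fun r : ℝ => L^2 * r^(1-2*b)) (Ioc 0 δ) := by
    have := (intervalIntegral.intervalIntegrable_rpow' (a := 0) (b := δ)
      (by linarith : (-1:ℝ) < 1-2*b))
    rw [intervalIntegrable_iff_integrableOn_Ioc_of_le hδ.le] at this
    exact this.const_mul _
  have h2 : IntegrableOn (fun r : ℝ => 4 * r^(-(1+2*b))) (Ioi δ) :=
    (integrableOn_Ioi_rpow_of_lt (by linarith) hδ).const_mul _
  have e1 : ∀ r ∈ Ioc (0:ℝ) δ, (fun r : ℝ => L^2 * r^(1-2*b)) r = G r := by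
    intro r hr; simp only [hG, if_pos hr.2]
  have e2 : ∀ r ∈ Ioi δ, (fun r : ℝ => 4 * r^(-(1+2*b))) r = G r := by
    intro r hr; simp only [hG, if_neg (not_le.mpr (mem_Ioi.mp hr))]
  have h1' : IntegrableOn G (Ioc 0 δ) := h1.congr_fun e1 measurableSet_Ioc
  have h2' : IntegrableOn G (Ioi δ) := h2.congr_fun e2 measurableSet_Ioi
  have hunion : Ioc (0:ℝ) δ ∪ Ioi δ = Ioi 0 := Ioc_union_Ioi_eq_Ioi hδ.le
  have hint : IntegrableOn G (Ioi 0) := by rw [← hunion]; exact h1'.union h2'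
  refine ⟨hint, ?_⟩
  have hdisj : Disjoint (Ioc (0:ℝ) δ) (Ioi δ) := by
    rw [Set.disjoint_left]; intro r hr hr'; exact absurd hr.2 (not_le.mpr (mem_Ioi.mp hr'))
  rw [← hunion, setIntegral_union hdisj measurableSet_Ioi h1' h2']
  have v1 : ∫ r in Ioc (0:ℝ) δ, G r = L^2 * δ^(2-2*b)/(2-2*b) := by
    rw [setIntegral_congr_fun measurableSet_Ioc (fun r hr => (e1 r hr).symm)]
    rw [← intervalIntegral.integral_of_le hδ.le]
    rw [intervalIntegral.integral_const_mul]
    rw [integral_rpow (Or.inl (by linarith : (-1:ℝ) < 1-2*b))]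
    rw [Real.zero_rpow (by linarith : 1-2*b+1 ≠ 0)]
    rw [show (1:ℝ)-2*b+1 = 2-2*b by ring]
    ring
  have v2 : ∫ r in Ioi δ, G r = 4 * δ^(-(2*b))/(2*b) := by
    rw [setIntegral_congr_fun measurableSet_Ioi (fun r hr => (e2 r hr).symm)]
    rw [MeasureTheory.integral_const_mul, integral_Ioi_rpow_of_lt (by linarith) hδ]
    rw [show -(1+2*b)+1 = -(2*b) by ring]
    field_simp
  rw [v1, v2]

lemma steinD_abstract {b : ℝ} (hb : b ∈ Set.Ioo (0:ℝ) 1) (f : ℝ → ℂ) (x L δ : ℝ)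
    (hL : 0 ≤ L) (hδ : 0 < δ)
    (h2 : ∀ y, ‖f x - f y‖ ≤ 2)
    (hlip : ∀ y, |x - y| ≤ δ → ‖f x - f y‖ ≤ L * |x - y|) :
    steinD b f x ≤ (2*(L^2 * δ^(2-2*b)/(2-2*b) + 4 * δ^(-(2*b))/(2*b))) ^ (1/2:ℝ) := by
  obtain ⟨hb0, hb1⟩ := hb
  set G : ℝ → ℝ := fun r => if r ≤ δ then L^2 * r^(1-2*b) else 4 * r^(-(1+2*b)) with hG
  obtain ⟨hGi, hGv⟩ := G_pieces ⟨hb0, hb1⟩ hδ hL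
  have hGabs : Integrable (fun z : ℝ => G |z|) := integrable_comp_abs' hGi
  have hmaj : Integrable (fun y : ℝ => G |x - y|) :=
    (integrable_comp_sub_left (fun z : ℝ => G |z|) x).mpr hGabs
  have hpt : ∀ y : ℝ, ‖f x - f y‖ ^ 2 / |x - y| ^ (1 + 2 * b) ≤ G |x - y| := by
    intro y
    by_cases hy : |x - y| ≤ δ
    · simp only [hG, if_pos hy]
      rcases eq_or_ne x y with h | h
      · subst h
        simp only [sub_self, norm_zero, abs_zero]
        rw [Real.zero_rpow (by linarith : 1 + 2*b ≠ 0)]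
        simp only [ne_eq, OfNat.ofNat_ne_zero, not_false_eq_true, zero_pow, div_zero]
        positivity
      · have hz : 0 < |x - y| := abs_pos.mpr (sub_ne_zero.mpr h)
        have hnum : ‖f x - f y‖ ^ 2 ≤ (L * |x - y|) ^ 2 :=
          pow_le_pow_left₀ (norm_nonneg _) (hlip y hy) 2
        have heq : (L * |x - y|) ^ 2 / |x - y| ^ (1 + 2 * b)
            = L ^ 2 * |x - y| ^ (1 - 2 * b) := by
          rw [mul_pow, mul_div_assoc]
          congr 1
          rw [← Real.rpow_natCast |x - y| 2, ← Real.rpow_sub hz]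
          ring_nf
        rw [← heq]
        gcongr

    · simp only [hG, if_neg hy]
      push_neg at hy
      have hz : 0 < |x - y| := lt_trans hδ hy
      have hnum : ‖f x - f y‖ ^ 2 ≤ 4 := by
        have := h2 y; nlinarith [norm_nonneg (f x - f y)]
      rw [Real.rpow_neg hz.le, ← div_eq_mul_inv]
      gcongr

  have hmono : (∫ y : ℝ, ‖f x - f y‖ ^ 2 / |x - y| ^ (1 + 2 * b)) ≤ ∫ y : ℝ, G |x - y| := by
    refine integral_mono_of_nonneg ?_ hmaj (Filter.Eventually.of_forall hpt)
    refine Filter.Eventually.of_forall (fun y => ?_)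
    positivity
  have hval : (∫ y : ℝ, G |x - y|) = 2*(L^2 * δ^(2-2*b)/(2-2*b) + 4 * δ^(-(2*b))/(2*b)) := by
    have h1 : (∫ y : ℝ, G |x - y|) = ∫ z : ℝ, G |z| :=
      integral_sub_left_eq_self (fun z : ℝ => G |z|) volume x
    rw [h1, integral_comp_abs, hGv]
  rw [steinD]
  apply Real.rpow_le_rpow (by positivity) (le_of_le_of_eq hmono hval) (by norm_num)


/-- for `b, a ∈ (0,1)` and `t > 0`,
`𝒟^b(e^{−it|x|^{1+a}x})(x) ≤ c (t^{b/(2+a)} + t^b |x|^{(1+a)b})`. -/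
theorem steinD_exp_symbol_bound (a b : ℝ) (ha : a ∈ Set.Ioo (0 : ℝ) 1)
    (hb : b ∈ Set.Ioo (0 : ℝ) 1) :
    ∃ c : ℝ, 0 ≤ c ∧ ∀ t : ℝ, 0 < t → ∀ x : ℝ,
      steinD b (fun y => Complex.exp (-Complex.I * t * (|y| ^ (1 + a) : ℝ) * y)) x
        ≤ c * (t ^ (b / (2 + a)) + t ^ b * |x| ^ ((1 + a) * b)) := by
  obtain ⟨ha0, ha1⟩ := ha
  obtain ⟨hb0, hb1⟩ := hb
  have h2b : (0:ℝ) < 2 - 2*b := by linarith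
  set C₀ : ℝ := 2*((2+a)^2/(2-2*b) + 4/(2*b)) with hC₀
  have hC₀pos : 0 < C₀ := by positivity
  refine ⟨C₀^(1/2:ℝ) * 2^((1+a)*b), by positivity, ?_⟩
  intro t ht x
  set l : ℝ := t ^ ((1:ℝ)/(2+a)) with hldef
  have hl : 0 < l := Real.rpow_pos_of_pos ht _
  have h2a : (2:ℝ) + a ≠ 0 := by linarith
  have ht_eq : l^(2+a) = t := by
    rw [hldef, ← Real.rpow_mul ht.le, one_div, inv_mul_cancel₀ h2a, Real.rpow_one]
  set u : ℝ := 1 + l*|x| with hu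
  have hu1 : 1 ≤ u := by
    have h : 0 ≤ l*|x| := by positivity
    linarith
  have hu0 : 0 < u := lt_of_lt_of_le one_pos hu1
  set δ : ℝ := l⁻¹ * u^(-(1+a)) with hδdef
  have hδ : 0 < δ := by positivity
  set M : ℝ := l⁻¹ * u with hM
  have hMeq : M = l⁻¹ + |x| := by
    rw [hM, hu, mul_add, mul_one, ← mul_assoc, inv_mul_cancel₀ hl.ne', one_mul]
  have hMx : |x| ≤ M := by
    rw [hMeq]
    have : 0 ≤ l⁻¹ := by positivity
    linarith
  have hδle : δ ≤ l⁻¹ := by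
    have h1 : u^(-(1+a)) ≤ 1 := Real.rpow_le_one_of_one_le_of_nonpos hu1 (by linarith)
    calc δ = l⁻¹ * u^(-(1+a)) := rfl
      _ ≤ l⁻¹ * 1 := by gcongr <;> positivity
      _ = l⁻¹ := mul_one _
  set L : ℝ := (2+a) * l * u^(1+a) with hLdef
  have hLnn : 0 ≤ L := by positivity
  set f : ℝ → ℂ := fun y => Complex.exp (-Complex.I * t * (|y| ^ (1 + a) : ℝ) * y) with hf
  have hfeq : ∀ y, f y = Complex.exp (((-(t * (|y|^(1+a) * y))) : ℝ) * Complex.I) := by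
    intro y
    simp only [hf]
    congr 1
    push_cast
    ring
  have h2 : ∀ y, ‖f x - f y‖ ≤ 2 := by
    intro y
    calc ‖f x - f y‖ ≤ ‖f x‖ + ‖f y‖ := norm_sub_le _ _
      _ ≤ 2 := by
          rw [hfeq x, hfeq y,
            Complex.norm_exp_ofReal_mul_I, Complex.norm_exp_ofReal_mul_I]
          norm_num
  have hLM : t * ((2+a) * M^(1+a)) = L := by
    rw [hM, Real.mul_rpow (by positivity) hu0.le, hLdef, ← ht_eq,
      ← Real.rpow_neg_one l, ← Real.rpow_mul hl.le]
    have hll : l^(2+a) * l^(-1*(1+a)) = l := by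
      rw [← Real.rpow_add hl, show (2+a) + (-1*(1+a)) = (1:ℝ) by ring, Real.rpow_one]
    calc l^(2+a) * ((2+a) * (l^(-1*(1+a)) * u^(1+a)))
        = (2+a) * (l^(2+a) * l^(-1*(1+a))) * u^(1+a) := by ring
      _ = (2+a) * l * u^(1+a) := by rw [hll]
  have hlip : ∀ y, |x - y| ≤ δ → ‖f x - f y‖ ≤ L * |x - y| := by
    intro y hy
    have hyM : |y| ≤ M := by
      have h1 : |y| - |x| ≤ |y - x| := abs_sub_abs_le_abs_sub y x
      rw [abs_sub_comm] at h1
      rw [hMeq]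
      linarith
    rw [hfeq x, hfeq y]
    have hles := norm_expI_sub (-(t * (|x|^(1+a) * x))) (-(t * (|y|^(1+a) * y)))
    have hphi := phi_lip a ha0 (M := M) hMx hyM
    calc ‖Complex.exp (((-(t * (|x|^(1+a) * x))) : ℝ) * Complex.I)
          - Complex.exp (((-(t * (|y|^(1+a) * y))) : ℝ) * Complex.I)‖
        ≤ |(-(t * (|x|^(1+a) * x))) - (-(t * (|y|^(1+a) * y)))| := hles
      _ = t * |(|x|^(1+a) * x) - (|y|^(1+a) * y)| := by
          rw [show (-(t * (|x|^(1+a) * x))) - (-(t * (|y|^(1+a) * y)))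
            = -(t * ((|x|^(1+a) * x) - (|y|^(1+a) * y))) by ring, abs_neg, abs_mul,
            abs_of_pos ht]
      _ ≤ t * ((2+a) * M^(1+a) * |x - y|) := by
          exact mul_le_mul_of_nonneg_left hphi ht.le
      _ = L * |x - y| := by rw [← hLM]; ring
  have habs := steinD_abstract ⟨hb0, hb1⟩ f x L δ hLnn hδ h2 hlip
  -- now the rpow algebra
  set X : ℝ := l^b * u^((1+a)*b) with hX
  have hXpos : 0 < X := by positivity
  have hl1 : (l⁻¹)^(-(2*b)) = l^b * l^b := by
    rw [← Real.rpow_neg_one l, ← Real.rpow_mul hl.le,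
      show (-1:ℝ)*(-(2*b)) = b + b by ring, Real.rpow_add hl]
  have hu2 : (u^(-(1+a)))^(-(2*b)) = u^((1+a)*b) * u^((1+a)*b) := by
    rw [← Real.rpow_mul hu0.le, show -(1+a)*(-(2*b)) = (1+a)*b + (1+a)*b by ring,
      Real.rpow_add hu0]
  have factB : δ^(-(2*b)) = X^2 := by
    rw [hδdef, Real.mul_rpow (by positivity) (by positivity), hl1, hu2, hX]
    ring
  have hδ2 : δ^(2-2*b) = (l^(-(2-2*b))) * (u^(-(1+a)*(2-2*b))) := by
    rw [hδdef, Real.mul_rpow (by positivity) (by positivity), ← Real.rpow_neg_one l,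
      ← Real.rpow_mul hl.le, ← Real.rpow_mul hu0.le,
      show (-1:ℝ)*(2-2*b) = -(2-2*b) by ring]
  have hpow1 : l^(2:ℕ) * l^(-(2-2*b)) = l^b * l^b := by
    rw [← Real.rpow_natCast l 2, ← Real.rpow_add hl,
      show ((2:ℕ):ℝ) + -(2-2*b) = b + b by push_cast; ring, Real.rpow_add hl]
  have hpow2 : (u^(1+a))^(2:ℕ) * u^(-(1+a)*(2-2*b)) = u^((1+a)*b) * u^((1+a)*b) := by
    rw [← Real.rpow_natCast (u^(1+a)) 2, ← Real.rpow_mul hu0.le, ← Real.rpow_add hu0,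
      show (1+a)*((2:ℕ):ℝ) + -(1+a)*(2-2*b) = (1+a)*b + (1+a)*b by push_cast; ring,
      Real.rpow_add hu0]
  have factA : L^2 * δ^(2-2*b) = (2+a)^2 * X^2 := by
    rw [hLdef, hδ2, hX]
    calc ((2+a) * l * u^(1+a))^2 * (l^(-(2-2*b)) * u^(-(1+a)*(2-2*b)))
        = (2+a)^2 * (l^(2:ℕ) * l^(-(2-2*b))) * ((u^(1+a))^(2:ℕ) * u^(-(1+a)*(2-2*b))) := by
          ring
      _ = (2+a)^2 * (l^b * l^b) * (u^((1+a)*b) * u^((1+a)*b)) := by rw [hpow1, hpow2]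
      _ = (2+a)^2 * (l^b * u^((1+a)*b))^2 := by ring
  have hSeq : 2*(L^2 * δ^(2-2*b)/(2-2*b) + 4 * δ^(-(2*b))/(2*b)) = C₀ * X^2 := by
    rw [factA, factB, hC₀]; ring
  have hShalf : (C₀ * X^2) ^ (1/2:ℝ) = C₀^(1/2:ℝ) * X := by
    rw [Real.mul_rpow hC₀pos.le (by positivity)]
    congr 1
    rw [← Real.rpow_natCast X 2, ← Real.rpow_mul hXpos.le]
    norm_num
  have hlb : l^b = t^(b/(2+a)) := by
    rw [hldef, ← Real.rpow_mul ht.le]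
    congr 1
    field_simp
  have hlab : l^b * (l*|x|)^((1+a)*b) = t^b * |x|^((1+a)*b) := by
    rw [Real.mul_rpow hl.le (abs_nonneg x), ← mul_assoc, ← Real.rpow_add hl,
      show b + (1+a)*b = (2+a)*b by ring]
    congr 1
    rw [Real.rpow_mul hl.le, ht_eq]
  have hub : u^((1+a)*b) ≤ 2^((1+a)*b) * (1 + (l*|x|)^((1+a)*b)) := by
    have hpnn : (0:ℝ) ≤ (1+a)*b := by positivity
    have hz : (0:ℝ) ≤ (l*|x|)^((1+a)*b) := by positivity
    by_cases hcase : l*|x| ≤ 1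
    · have h1 : u ≤ 2 := by rw [hu]; linarith
      calc u^((1+a)*b) ≤ 2^((1+a)*b) := Real.rpow_le_rpow hu0.le h1 hpnn
        _ = 2^((1+a)*b) * 1 := (mul_one _).symm
        _ ≤ 2^((1+a)*b) * (1 + (l*|x|)^((1+a)*b)) := by gcongr; linarith
    · push_neg at hcase
      have h1 : u ≤ 2*(l*|x|) := by rw [hu]; linarith
      calc u^((1+a)*b) ≤ (2*(l*|x|))^((1+a)*b) := Real.rpow_le_rpow hu0.le h1 hpnn
        _ = 2^((1+a)*b) * (l*|x|)^((1+a)*b) := Real.mul_rpow (by norm_num) (by positivity)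
        _ ≤ 2^((1+a)*b) * (1 + (l*|x|)^((1+a)*b)) := by gcongr; linarith
  have hXle : X ≤ 2^((1+a)*b) * (t^(b/(2+a)) + t^b * |x|^((1+a)*b)) := by
    calc X = l^b * u^((1+a)*b) := hX
      _ ≤ l^b * (2^((1+a)*b) * (1 + (l*|x|)^((1+a)*b))) := by
          gcongr
      _ = 2^((1+a)*b) * (l^b + l^b * (l*|x|)^((1+a)*b)) := by ring
      _ = 2^((1+a)*b) * (t^(b/(2+a)) + t^b * |x|^((1+a)*b)) := by rw [hlab, hlb]
  calc steinD b f x ≤ (2*(L^2 * δ^(2-2*b)/(2-2*b) + 4 * δ^(-(2*b))/(2*b))) ^ (1/2:ℝ) := habs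
    _ = C₀^(1/2:ℝ) * X := by rw [hSeq, hShalf]
    _ ≤ C₀^(1/2:ℝ) * (2^((1+a)*b) * (t^(b/(2+a)) + t^b * |x|^((1+a)*b))) := by
        gcongr

    _ = C₀^(1/2:ℝ) * 2^((1+a)*b) * (t^(b/(2+a)) + t^b * |x|^((1+a)*b)) := by ring
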